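/- Let n ≥ 1 and let ū=(u_1,…,u_n), v̄=(v_1,…,v_n) be tuples of complex numbers with u_1,…,u_{n−1},v_1,…,v_n generic (pairwise distinct and all denominators below nonzero). Then the DWPF K(ū|v̄), viewed as a rational function of u_n, has a simple pole at u_n=v_n, and lim_{u_n→v_n} (u_n−v_n)·K(ū|v̄) = c·f(v_n,v̄_n)·f(ū_n,u_n)·K(ū_n|v̄_n), where ū_n=ū∖{u_n} and v̄_n=v̄∖{v_n}. Equivalently, K(ū|v̄) − g(u_n,v_n)·f(v_n,v̄_n)·f(ū_n,u_n)·K(ū_n|v̄_n) is regular at u_n=v_n. -/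

import Mathlib

open scoped BigOperators

/-- The rational function `g(x,y) = c/(x-y)`. -/
noncomputable def gG (c x y : ℂ) : ℂ := c / (x - y)

/-- The rational function `f(x,y) = (x-y+c)/(x-y)`. -/
noncomputable def fF (c x y : ℂ) : ℂ := (x - y + c) / (x - y)

/-- The rational function `h(x,y) = (x-y+c)/c`. -/
noncomputable def hH (c x y : ℂ) : ℂ := (x - y + c) / c

/-- A two-argument function applied to tuples denotes the product over all elements. -/
noncomputable def pF (F : ℂ → ℂ → ℂ) (U V : List ℂ) : ℂ :=
  (U.map fun x => (V.map fun y => F x y).prod).prod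

/-- The domain-wall partition function `K(ū|v̄) = Δ'(ū)·Δ(v̄)·h(ū,v̄)·det(g(u_j,v_k)/h(u_j,v_k))`,
written in the equivalent (rational-continuation) form in which the prefactor `h(ū,v̄)` is
distributed over the rows of the determinant:
`K(ū|v̄) = Δ'(ū)·Δ(v̄)·det( g(u_j,v_k)·∏_{k'≠k} h(u_j,v_{k'}) )`.
For tuples of equal length `n` with all denominators nonzero this coincides with the literal
formula, and `K(∅|∅) = 1`. -/
noncomputable def Kd (c : ℂ) (U V : List ℂ) : ℂ :=
  (∏ j : Fin U.length, ∏ k : Fin U.length,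
      if (j : ℕ) < (k : ℕ) then gG c (U.get j) (U.get k) else 1) *
  (∏ j : Fin V.length, ∏ k : Fin V.length,
      if (k : ℕ) < (j : ℕ) then gG c (V.get j) (V.get k) else 1) *
  Matrix.det (Matrix.of fun j k : Fin U.length =>
    gG c (U.get j) (V.getD (k : ℕ) 0) *
      ∏ k' : Fin U.length, if k' = k then 1 else hH c (U.get j) (V.getD (k' : ℕ) 0))

/-- The sub-tuple of a tuple `L` selected by a set `A` of positions (in increasing order). -/
noncomputable def subL (L : List ℂ) (A : Finset (Fin L.length)) : List ℂ :=
  (A.sort (· ≤ ·)).map L.get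

/-- Genericity of a family of parameters: all members are pairwise distinct and no difference
of two members equals `±c`, so that every denominator occurring (also after shifts by `±c`)
is nonzero. -/
def Generic (c : ℂ) (L : List ℂ) : Prop :=
  L.Pairwise fun x y => x ≠ y ∧ x - y ≠ c ∧ x - y ≠ -c

noncomputable def KdF (c : ℂ) (n : ℕ) (u v : Fin n → ℂ) : ℂ :=
  (∏ j : Fin n, ∏ k : Fin n, if (j : ℕ) < (k : ℕ) then gG c (u j) (u k) else 1) *
  (∏ j : Fin n, ∏ k : Fin n, if (k : ℕ) < (j : ℕ) then gG c (v j) (v k) else 1) *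
  Matrix.det (Matrix.of fun j k : Fin n =>
    gG c (u j) (v k) * ∏ k' : Fin n, if k' = k then 1 else hH c (u j) (v k'))

lemma fF_eq (c : ℂ) (hc : c ≠ 0) (x y : ℂ) : fF c x y = gG c x y * hH c x y := by
  unfold fF gG hH
  rcases eq_or_ne (x - y) 0 with h | h
  · simp [h]
  · field_simp

lemma prodU_snoc (c : ℂ) (m : ℕ) (w : Fin m → ℂ) (x : ℂ) :
    (∏ j : Fin (m + 1), ∏ k : Fin (m + 1),
      if (j : ℕ) < (k : ℕ) then gG c ((Fin.snoc w x : Fin (m+1) → ℂ) j) ((Fin.snoc w x : Fin (m+1) → ℂ) k) else 1)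
    = (∏ j : Fin m, ∏ k : Fin m, if (j : ℕ) < (k : ℕ) then gG c (w j) (w k) else 1)
      * ∏ j : Fin m, gG c (w j) x := by
  rw [Fin.prod_univ_castSucc]
  have h1 : ∀ j : Fin (m+1), (∏ k : Fin (m + 1),
      if (j : ℕ) < (k : ℕ) then gG c ((Fin.snoc w x : Fin (m+1) → ℂ) j) ((Fin.snoc w x : Fin (m+1) → ℂ) k) else 1)
      = (∏ k : Fin m, if (j : ℕ) < (k : ℕ) then gG c ((Fin.snoc w x : Fin (m+1) → ℂ) j) (w k) else 1)
        * (if (j : ℕ) < m then gG c ((Fin.snoc w x : Fin (m+1) → ℂ) j) x else 1) := by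
    intro j
    rw [Fin.prod_univ_castSucc]
    simp [Fin.snoc_castSucc, Fin.snoc_last]
  simp only [h1]
  rw [Finset.prod_mul_distrib]
  have h2 : ∀ k : Fin m, (if m < (k : ℕ) then gG c x (w k) else 1) = 1 :=
    fun k => if_neg (Nat.not_lt.mpr k.isLt.le)
  simp [Fin.snoc_castSucc, Fin.snoc_last, Fin.is_lt, h2]

lemma prodV_snoc (c : ℂ) (m : ℕ) (w : Fin m → ℂ) (x : ℂ) :
    (∏ j : Fin (m + 1), ∏ k : Fin (m + 1),
      if (k : ℕ) < (j : ℕ) then gG c ((Fin.snoc w x : Fin (m+1) → ℂ) j) ((Fin.snoc w x : Fin (m+1) → ℂ) k) else 1)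
    = (∏ j : Fin m, ∏ k : Fin m, if (k : ℕ) < (j : ℕ) then gG c (w j) (w k) else 1)
      * ∏ k : Fin m, gG c x (w k) := by
  rw [Fin.prod_univ_castSucc]
  have h1 : ∀ j : Fin (m+1), (∏ k : Fin (m + 1),
      if (k : ℕ) < (j : ℕ) then gG c ((Fin.snoc w x : Fin (m+1) → ℂ) j) ((Fin.snoc w x : Fin (m+1) → ℂ) k) else 1)
      = (∏ k : Fin m, if (k : ℕ) < (j : ℕ) then gG c ((Fin.snoc w x : Fin (m+1) → ℂ) j) (w k) else 1)
        * (if m < (j : ℕ) then gG c ((Fin.snoc w x : Fin (m+1) → ℂ) j) x else 1) := by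
    intro j
    rw [Fin.prod_univ_castSucc]
    simp [Fin.snoc_castSucc, Fin.snoc_last]
  simp only [h1]
  rw [Finset.prod_mul_distrib]
  have h2 : ∀ j : Fin m, (if m < (j : ℕ) then gG c (w j) x else 1) = 1 :=
    fun j => if_neg (Nat.not_lt.mpr j.isLt.le)
  simp [Fin.snoc_castSucc, Fin.snoc_last, Fin.is_lt, h2]

noncomputable def Mm (c : ℂ) (m : ℕ) (u v : Fin m → ℂ) : Matrix (Fin m) (Fin m) ℂ :=
  Matrix.of fun j k => gG c (u j) (v k) * ∏ k' : Fin m, if k' = k then 1 else hH c (u j) (v k')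

noncomputable def Mx (c : ℂ) (m : ℕ) (u v : Fin m → ℂ) (x vl : ℂ) :
    Matrix (Fin (m + 1)) (Fin (m + 1)) ℂ :=
  Matrix.of fun j k => gG c ((Fin.snoc u x : Fin (m+1) → ℂ) j) ((Fin.snoc v vl : Fin (m+1) → ℂ) k) *
    ∏ k' : Fin (m + 1), if k' = k then 1
      else hH c ((Fin.snoc u x : Fin (m+1) → ℂ) j) ((Fin.snoc v vl : Fin (m+1) → ℂ) k')

lemma Mx_row_castSucc (c : ℂ) (m : ℕ) (u v : Fin m → ℂ) (x y vl : ℂ) (j : Fin m)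
    (k : Fin (m + 1)) : Mx c m u v x vl (Fin.castSucc j) k = Mx c m u v y vl (Fin.castSucc j) k := by
  simp [Mx, Fin.snoc_castSucc]

lemma Mx_last_last (c : ℂ) (m : ℕ) (u v : Fin m → ℂ) (x vl : ℂ) :
    Mx c m u v x vl (Fin.last m) (Fin.last m) = gG c x vl * ∏ k, hH c x (v k) := by
  simp only [Mx, Matrix.of_apply, Fin.snoc_last]
  rw [Fin.prod_univ_castSucc]
  simp [Fin.snoc_castSucc, (Fin.castSucc_lt_last _).ne]

lemma Mx_minor (c : ℂ) (m : ℕ) (u v : Fin m → ℂ) (x vl : ℂ) :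
    Matrix.det ((Mx c m u v x vl).submatrix Fin.castSucc Fin.castSucc)
      = (∏ j, hH c (u j) vl) * Matrix.det (Mm c m u v) := by
  have : (Mx c m u v x vl).submatrix Fin.castSucc Fin.castSucc
      = Matrix.of fun j k => hH c (u j) vl * Mm c m u v j k := by
    ext j k
    simp only [Matrix.submatrix_apply, Mx, Mm, Matrix.of_apply, Fin.snoc_castSucc]
    rw [Fin.prod_univ_castSucc]
    simp only [Fin.snoc_castSucc, Fin.snoc_last, Fin.castSucc_inj,
      (Fin.castSucc_lt_last k).ne', if_false]
    ring
  rw [this, Matrix.det_mul_column]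

lemma det_Mx (c : ℂ) (m : ℕ) (u v : Fin m → ℂ) (x vl : ℂ) :
    Matrix.det (Mx c m u v x vl)
      = (∑ k : Fin m, (-1 : ℂ) ^ (m + (k : ℕ)) * Mx c m u v x vl (Fin.last m) (Fin.castSucc k) *
          Matrix.det ((Mx c m u v vl vl).submatrix Fin.castSucc (Fin.castSucc k).succAbove))
        + gG c x vl * (∏ k, hH c x (v k)) * ((∏ j, hH c (u j) vl) * Matrix.det (Mm c m u v)) := by
  rw [Matrix.det_succ_row (Mx c m u v x vl) (Fin.last m)]
  simp only [Fin.succAbove_last]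
  rw [Fin.sum_univ_castSucc]
  have hsub : ∀ k : Fin m, (Mx c m u v x vl).submatrix Fin.castSucc (Fin.castSucc k).succAbove
      = (Mx c m u v vl vl).submatrix Fin.castSucc (Fin.castSucc k).succAbove := by
    intro k
    ext j i
    exact Mx_row_castSucc c m u v x vl vl j _
  congr 1
  · refine Finset.sum_congr rfl fun k _ => ?_
    rw [hsub k]
    congr 2
  · rw [Fin.succAbove_last, Mx_minor, Mx_last_last]
    simp [Fin.val_last]

open Topology Filter in
lemma KdF_main (c : ℂ) (hc : c ≠ 0) (m : ℕ) (u v : Fin m → ℂ) (vl : ℂ)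
    (hu : ∀ j, u j - vl ≠ 0) (hv : ∀ k, vl - v k ≠ 0) :
    Filter.Tendsto (fun x : ℂ => (x - vl) * KdF c (m + 1) (Fin.snoc u x) (Fin.snoc v vl))
      (𝓝[≠] vl)
      (𝓝 (c * (∏ k, fF c vl (v k)) * (∏ j, fF c (u j) vl) * KdF c m u v)) ∧
    ∃ r : ℂ, Filter.Tendsto (fun x : ℂ => KdF c (m + 1) (Fin.snoc u x) (Fin.snoc v vl)
        - gG c x vl * (∏ k, fF c vl (v k)) * (∏ j, fF c (u j) x) * KdF c m u v)
      (𝓝[≠] vl) (𝓝 r) := by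
  have hKdF : ∀ x : ℂ, KdF c (m + 1) (Fin.snoc u x) (Fin.snoc v vl)
      = ((∏ j : Fin m, ∏ k : Fin m, if (j : ℕ) < (k : ℕ) then gG c (u j) (u k) else 1)
          * ∏ j : Fin m, gG c (u j) x)
        * ((∏ j : Fin m, ∏ k : Fin m, if (k : ℕ) < (j : ℕ) then gG c (v j) (v k) else 1)
          * ∏ k : Fin m, gG c vl (v k))
        * Matrix.det (Mx c m u v x vl) := by
    intro x
    show _ * _ * _ = _
    rw [prodU_snoc c m u x, prodV_snoc c m v vl]
    rfl
  have hKm : KdF c m u v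
      = (∏ j : Fin m, ∏ k : Fin m, if (j : ℕ) < (k : ℕ) then gG c (u j) (u k) else 1)
        * (∏ j : Fin m, ∏ k : Fin m, if (k : ℕ) < (j : ℕ) then gG c (v j) (v k) else 1)
        * Matrix.det (Mm c m u v) := rfl
  set D : ℂ → ℂ := fun x => ∑ k : Fin m,
      (-1 : ℂ) ^ (m + (k : ℕ)) * Mx c m u v x vl (Fin.last m) (Fin.castSucc k) *
        Matrix.det ((Mx c m u v vl vl).submatrix Fin.castSucc (Fin.castSucc k).succAbove)
    with hDdef
  set φ : ℂ → ℂ := fun x => (∏ k, hH c x (v k)) * (∏ j, hH c (u j) vl)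
      - (∏ j, hH c (u j) x) * (∏ k, hH c vl (v k)) with hφdef
  have hφ0 : φ vl = 0 := by rw [hφdef]; ring
  -- continuity of auxiliary functions
  have hHcont : ∀ b : ℂ, Continuous (fun x : ℂ => hH c x b) := by
    intro b
    exact ((continuous_id.sub continuous_const).add continuous_const).div_const c
  have htPu : Filter.Tendsto (fun x : ℂ => ∏ j, gG c (u j) x) (𝓝 vl)
      (𝓝 (∏ j, gG c (u j) vl)) := by
    refine tendsto_finset_prod _ fun j _ => ?_
    exact (continuousAt_const.div ((continuous_const.sub continuous_id).continuousAt) (hu j))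
  have htHx : Filter.Tendsto (fun x : ℂ => ∏ k, hH c x (v k)) (𝓝 vl)
      (𝓝 (∏ k, hH c vl (v k))) := by
    refine tendsto_finset_prod _ fun k _ => ?_
    exact (hHcont (v k)).continuousAt
  have hD : Filter.Tendsto D (𝓝 vl) (𝓝 (D vl)) := by
    rw [hDdef]
    refine tendsto_finset_sum _ fun k _ => ?_
    refine Filter.Tendsto.mul (Filter.Tendsto.mul tendsto_const_nhds ?_) tendsto_const_nhds
    show Filter.Tendsto (fun x : ℂ => Mx c m u v x vl (Fin.last m) (Fin.castSucc k)) _ _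
    simp only [Mx, Matrix.of_apply, Fin.snoc_last, Fin.snoc_castSucc]
    refine Filter.Tendsto.mul
      (continuousAt_const.div ((continuous_id.sub continuous_const).continuousAt)
        (hv k)) ?_
    refine tendsto_finset_prod _ fun k' _ => ?_
    rcases eq_or_ne k' (Fin.castSucc k) with h | h
    · simp only [h, if_pos rfl]; exact tendsto_const_nhds
    · simp only [if_neg h]
      exact ((hHcont _).continuousAt)
  have hφdiff : DifferentiableAt ℂ φ vl := by
    rw [hφdef]
    refine DifferentiableAt.sub (DifferentiableAt.mul ?_ (differentiableAt_const _))
      (DifferentiableAt.mul ?_ (differentiableAt_const _))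
    · exact DifferentiableAt.fun_finsetProd fun k _ =>
        (((differentiableAt_id.sub (differentiableAt_const _)).add
          (differentiableAt_const _)).div_const c)
    · exact DifferentiableAt.fun_finsetProd fun j _ =>
        ((((differentiableAt_const _).sub differentiableAt_id).add
          (differentiableAt_const _)).div_const c)
  have hslope : Filter.Tendsto (slope φ vl) (𝓝[≠] vl) (𝓝 (deriv φ vl)) :=
    hasDerivAt_iff_tendsto_slope.mp hφdiff.hasDerivAt
  have key : ∀ x : ℂ, gG c x vl * φ x = c * slope φ vl x := by
    intro x
    rw [slope_def_field, hφ0, sub_zero]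
    show c / (x - vl) * φ x = _
    rw [div_mul_eq_mul_div, mul_div_assoc]
  constructor
  · -- part (a)
    have hEv : ∀ x : ℂ, x ≠ vl →
        (x - vl) * KdF c (m + 1) (Fin.snoc u x) (Fin.snoc v vl)
        = ((∏ j : Fin m, ∏ k : Fin m, if (j : ℕ) < (k : ℕ) then gG c (u j) (u k) else 1)
            * ∏ j : Fin m, gG c (u j) x)
          * ((∏ j : Fin m, ∏ k : Fin m, if (k : ℕ) < (j : ℕ) then gG c (v j) (v k) else 1)
            * ∏ k : Fin m, gG c vl (v k))
          * ((x - vl) * D x + c * ((∏ k, hH c x (v k))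
              * ((∏ j, hH c (u j) vl) * Matrix.det (Mm c m u v)))) := by
      intro x hx
      have hg : (x - vl) * gG c x vl = c := by
        show (x - vl) * (c / (x - vl)) = c
        field_simp [sub_ne_zero.mpr hx]
      rw [hKdF x, det_Mx]
      simp only [hDdef]
      linear_combination (((∏ j : Fin m, ∏ k : Fin m,
          if (j : ℕ) < (k : ℕ) then gG c (u j) (u k) else 1) * ∏ j : Fin m, gG c (u j) x)
        * ((∏ j : Fin m, ∏ k : Fin m, if (k : ℕ) < (j : ℕ) then gG c (v j) (v k) else 1)
          * ∏ k : Fin m, gG c vl (v k))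
        * ((∏ k, hH c x (v k)) * ((∏ j, hH c (u j) vl) * Matrix.det (Mm c m u v)))) * hg
    have hT : Filter.Tendsto (fun x : ℂ =>
        ((∏ j : Fin m, ∏ k : Fin m, if (j : ℕ) < (k : ℕ) then gG c (u j) (u k) else 1)
            * ∏ j : Fin m, gG c (u j) x)
          * ((∏ j : Fin m, ∏ k : Fin m, if (k : ℕ) < (j : ℕ) then gG c (v j) (v k) else 1)
            * ∏ k : Fin m, gG c vl (v k))
          * ((x - vl) * D x + c * ((∏ k, hH c x (v k))
              * ((∏ j, hH c (u j) vl) * Matrix.det (Mm c m u v))))) (𝓝 vl)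
        (𝓝 (((∏ j : Fin m, ∏ k : Fin m, if (j : ℕ) < (k : ℕ) then gG c (u j) (u k) else 1)
            * ∏ j : Fin m, gG c (u j) vl)
          * ((∏ j : Fin m, ∏ k : Fin m, if (k : ℕ) < (j : ℕ) then gG c (v j) (v k) else 1)
            * ∏ k : Fin m, gG c vl (v k))
          * ((vl - vl) * D vl + c * ((∏ k, hH c vl (v k))
              * ((∏ j, hH c (u j) vl) * Matrix.det (Mm c m u v)))))) := by
      refine Filter.Tendsto.mul (Filter.Tendsto.mul
        (tendsto_const_nhds.mul htPu) tendsto_const_nhds) ?_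
      refine Filter.Tendsto.add (Filter.Tendsto.mul ?_ hD)
        (tendsto_const_nhds.mul (htHx.mul tendsto_const_nhds))
      exact (continuous_id.sub continuous_const).continuousAt
    have hval : c * (∏ k, fF c vl (v k)) * (∏ j, fF c (u j) vl) * KdF c m u v
        = ((∏ j : Fin m, ∏ k : Fin m, if (j : ℕ) < (k : ℕ) then gG c (u j) (u k) else 1)
            * ∏ j : Fin m, gG c (u j) vl)
          * ((∏ j : Fin m, ∏ k : Fin m, if (k : ℕ) < (j : ℕ) then gG c (v j) (v k) else 1)
            * ∏ k : Fin m, gG c vl (v k))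
          * ((vl - vl) * D vl + c * ((∏ k, hH c vl (v k))
              * ((∏ j, hH c (u j) vl) * Matrix.det (Mm c m u v)))) := by
      simp only [fF_eq c hc, Finset.prod_mul_distrib, hKm, sub_self, zero_mul, zero_add]
      ring
    rw [hval]
    refine (hT.mono_left nhdsWithin_le_nhds).congr' ?_
    filter_upwards [self_mem_nhdsWithin] with x hx
    exact (hEv x hx).symm
  · -- part (b)
    have hId : ∀ x : ℂ, KdF c (m + 1) (Fin.snoc u x) (Fin.snoc v vl)
        - gG c x vl * (∏ k, fF c vl (v k)) * (∏ j, fF c (u j) x) * KdF c m u v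
        = ((∏ j : Fin m, ∏ k : Fin m, if (j : ℕ) < (k : ℕ) then gG c (u j) (u k) else 1)
            * ∏ j : Fin m, gG c (u j) x)
          * ((∏ j : Fin m, ∏ k : Fin m, if (k : ℕ) < (j : ℕ) then gG c (v j) (v k) else 1)
            * ∏ k : Fin m, gG c vl (v k))
          * (D x + Matrix.det (Mm c m u v) * (c * slope φ vl x)) := by
      intro x
      rw [hKdF x, det_Mx, ← key x]
      simp only [hDdef, hφdef]
      simp only [fF_eq c hc, Finset.prod_mul_distrib, hKm]
      ring
    refine ⟨((∏ j : Fin m, ∏ k : Fin m, if (j : ℕ) < (k : ℕ) then gG c (u j) (u k) else 1)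
            * ∏ j : Fin m, gG c (u j) vl)
          * ((∏ j : Fin m, ∏ k : Fin m, if (k : ℕ) < (j : ℕ) then gG c (v j) (v k) else 1)
            * ∏ k : Fin m, gG c vl (v k))
          * (D vl + Matrix.det (Mm c m u v) * (c * deriv φ vl)), ?_⟩
    have hT : Filter.Tendsto (fun x : ℂ =>
        ((∏ j : Fin m, ∏ k : Fin m, if (j : ℕ) < (k : ℕ) then gG c (u j) (u k) else 1)
            * ∏ j : Fin m, gG c (u j) x)
          * ((∏ j : Fin m, ∏ k : Fin m, if (k : ℕ) < (j : ℕ) then gG c (v j) (v k) else 1)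
            * ∏ k : Fin m, gG c vl (v k))
          * (D x + Matrix.det (Mm c m u v) * (c * slope φ vl x))) (𝓝[≠] vl)
        (𝓝 (((∏ j : Fin m, ∏ k : Fin m, if (j : ℕ) < (k : ℕ) then gG c (u j) (u k) else 1)
            * ∏ j : Fin m, gG c (u j) vl)
          * ((∏ j : Fin m, ∏ k : Fin m, if (k : ℕ) < (j : ℕ) then gG c (v j) (v k) else 1)
            * ∏ k : Fin m, gG c vl (v k))
          * (D vl + Matrix.det (Mm c m u v) * (c * deriv φ vl)))) := by
      refine Filter.Tendsto.mul (Filter.Tendsto.mul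
        (tendsto_const_nhds.mul (htPu.mono_left nhdsWithin_le_nhds)) tendsto_const_nhds) ?_
      exact Filter.Tendsto.add (hD.mono_left nhdsWithin_le_nhds)
        (tendsto_const_nhds.mul (tendsto_const_nhds.mul hslope))
    exact hT.congr fun x => (hId x).symm

lemma getD_eq_get' (L : List ℂ) (i : ℕ) (h : i < L.length) : L.getD i 0 = L.get ⟨i, h⟩ := by
  simp [List.getD_eq_getElem?_getD, List.getElem?_eq_getElem h]

lemma Kd_eq_KdF (c : ℂ) (U V : List ℂ) (h : V.length = U.length) :
    Kd c U V = KdF c U.length U.get (fun k => V.getD (k : ℕ) 0) := by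
  unfold Kd KdF
  congr 1
  congr 1
  rw [← Fin.prod_congr' (fun j : Fin V.length => ∏ k : Fin V.length,
    if (k : ℕ) < (j : ℕ) then gG c (V.get j) (V.get k) else 1) h.symm]
  refine Finset.prod_congr rfl fun j _ => ?_
  rw [← Fin.prod_congr' (fun k : Fin V.length =>
    if (k : ℕ) < ((Fin.cast h.symm j : Fin V.length) : ℕ) then
      gG c (V.get (Fin.cast h.symm j)) (V.get k) else 1) h.symm]
  refine Finset.prod_congr rfl fun k _ => ?_
  simp only [Fin.coe_cast]
  rw [getD_eq_get' V (j : ℕ) (by rw [h]; exact j.isLt),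
    getD_eq_get' V (k : ℕ) (by rw [h]; exact k.isLt)]
  rfl

lemma KdF_cast (c : ℂ) {n n' : ℕ} (h : n = n') (u v : Fin n → ℂ) :
    KdF c n u v = KdF c n' (u ∘ Fin.cast h.symm) (v ∘ Fin.cast h.symm) := by
  subst h; rfl

lemma prod_map_fin (g : ℂ → ℂ) (L : List ℂ) :
    (L.map g).prod = ∏ i : Fin L.length, g (L.get i) := by
  rw [← List.ofFn_getElem_eq_map, Fin.prod_ofFn]
  rfl


open Topology Filter in
/-- pole structure of the DWPF, eq. (A.1): as a function of the last argument
`u_n`, the DWPF has a simple pole at `u_n = v_n` with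
`lim_{u_n→v_n} (u_n−v_n)·K(ū|v̄) = c·f(v_n,v̄_n)·f(ū_n,v_n)·K(ū_n|v̄_n)`;
equivalently `K(ū|v̄) − g(u_n,v_n)·f(v_n,v̄_n)·f(ū_n,u_n)·K(ū_n|v̄_n)` is regular
(has a finite limit) at `u_n = v_n`. Here `ū_n`, `v̄_n` are the tuples with the last
element removed. -/
theorem stmt4 (c : ℂ) (hc : c ≠ 0) (n : ℕ) (hn : 1 ≤ n) (U' V' : List ℂ)
    (hU : U'.length = n - 1) (hV : V'.length = n - 1) (vl : ℂ)
    (hgen : Generic c (U' ++ V' ++ [vl])) :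
    Filter.Tendsto (fun x : ℂ => (x - vl) * Kd c (U' ++ [x]) (V' ++ [vl])) (𝓝[≠] vl)
      (𝓝 (c * pF (fF c) [vl] V' * pF (fF c) U' [vl] * Kd c U' V')) ∧
    ∃ r : ℂ, Filter.Tendsto
      (fun x : ℂ => Kd c (U' ++ [x]) (V' ++ [vl]) -
        gG c x vl * pF (fF c) [vl] V' * pF (fF c) U' [x] * Kd c U' V') (𝓝[≠] vl) (𝓝 r) := by
  classical
  have hVU : V'.length = U'.length := by rw [hV, hU]
  set u : Fin U'.length → ℂ := U'.get with hu_def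
  set v : Fin U'.length → ℂ := fun k => V'.getD (k : ℕ) 0 with hv_def
  have hvk : ∀ k : Fin U'.length, v k = V'.get ⟨(k : ℕ), by rw [hVU]; exact k.isLt⟩ := by
    intro k; exact getD_eq_get' _ _ _
  have hmem : ∀ a ∈ U' ++ V', a ≠ vl := by
    have h := (List.pairwise_append.mp hgen).2.2
    intro a ha
    exact (h a ha vl (by simp)).1
  have hu2 : ∀ j : Fin U'.length, u j - vl ≠ 0 := by
    intro j
    refine sub_ne_zero.mpr (hmem _ ?_)
    exact List.mem_append_left _ (List.get_mem _ _)
  have hv2 : ∀ k : Fin U'.length, vl - v k ≠ 0 := by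
    intro k
    refine sub_ne_zero.mpr (Ne.symm (hmem _ ?_))
    rw [hvk k]
    exact List.mem_append_right _ (List.get_mem _ _)
  have h1 : Kd c U' V' = KdF c U'.length u v := Kd_eq_KdF c U' V' hVU
  have hlen : ∀ x : ℂ, (U' ++ [x]).length = U'.length + 1 := by simp
  have h2 : ∀ x : ℂ, Kd c (U' ++ [x]) (V' ++ [vl])
      = KdF c (U'.length + 1) (Fin.snoc u x) (Fin.snoc v vl) := by
    intro x
    rw [Kd_eq_KdF c _ _ (by simp [hVU]), KdF_cast c (hlen x)]
    congr 1
    · funext j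
      refine Fin.lastCases ?_ (fun i => ?_) j
      · simp only [Function.comp_apply, Fin.snoc_last, List.get_eq_getElem]
        exact List.getElem_concat_length rfl _
      · simp only [Function.comp_apply, Fin.snoc_castSucc, List.get_eq_getElem, hu_def]
        exact List.getElem_append_left i.isLt
    · funext k
      refine Fin.lastCases ?_ (fun i => ?_) k
      · simp only [Function.comp_apply, Fin.snoc_last, Fin.coe_cast, Fin.val_last]
        have hl : (U'.length : ℕ) < (V' ++ [vl]).length := by simp [hVU]
        rw [getD_eq_get' _ _ hl]
        simp only [List.get_eq_getElem]
        exact List.getElem_concat_length hVU.symm _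
      · simp only [Function.comp_apply, Fin.snoc_castSucc, hv_def, Fin.coe_cast, Fin.coe_castSucc]
        have hl : (i : ℕ) < (V' ++ [vl]).length := by
          simp only [List.length_append, List.length_singleton]
          have := i.isLt
          omega
        rw [getD_eq_get' _ _ hl, getD_eq_get' _ _ (by rw [hVU]; exact i.isLt)]
        simp only [List.get_eq_getElem]
        exact List.getElem_append_left (by rw [hVU]; exact i.isLt)
  have hpV : pF (fF c) [vl] V' = ∏ k : Fin U'.length, fF c vl (v k) := by
    simp only [pF, List.map_cons, List.map_nil, List.prod_cons, List.prod_nil, mul_one]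
    rw [prod_map_fin (fF c vl) V']
    rw [← Fin.prod_congr' (fun i => fF c vl (V'.get i)) hVU.symm]
    refine Finset.prod_congr rfl fun k _ => ?_
    rw [hvk k]
    rfl
  have hpU : ∀ x : ℂ, pF (fF c) U' [x] = ∏ j : Fin U'.length, fF c (u j) x := by
    intro x
    simp only [pF, List.map_cons, List.map_nil, List.prod_cons, List.prod_nil, mul_one]
    rw [prod_map_fin (fun a => fF c a x) U']
  obtain ⟨ha, hb⟩ := KdF_main c hc U'.length u v vl hu2 hv2
  constructor
  · have he : (fun x : ℂ => (x - vl) * Kd c (U' ++ [x]) (V' ++ [vl]))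
        = fun x => (x - vl) * KdF c (U'.length + 1) (Fin.snoc u x) (Fin.snoc v vl) := by
      funext x; rw [h2 x]
    rw [he, hpV, hpU vl, h1]
    exact ha
  · obtain ⟨r, hr⟩ := hb
    refine ⟨r, ?_⟩
    have he : (fun x : ℂ => Kd c (U' ++ [x]) (V' ++ [vl]) -
          gG c x vl * pF (fF c) [vl] V' * pF (fF c) U' [x] * Kd c U' V')
        = fun x => KdF c (U'.length + 1) (Fin.snoc u x) (Fin.snoc v vl)
          - gG c x vl * (∏ k, fF c vl (v k)) * (∏ j, fF c (u j) x) * KdF c U'.length u v := by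
      funext x; rw [h2 x, hpV, hpU x, h1]
    rw [he]
    exact hr
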